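/- Let s ≥ 1, let Ã, A be real s×s matrices with A invertible, b̃ ∈ ℝˢ, Δt > 0, and set g = b̃ − Ãᵀeₛ ∈ ℝˢ where eₛ is the s-th standard basis vector. Let p : ℝ → ℝ be twice differentiable, let P : Fin s → (ℝ → ℝ) be componentwise twice differentiable and Q : Fin s → (ℝ → ℝ) be componentwise differentiable (derivatives denoted '). Suppose that for all x ∈ ℝ the ε = 0 limit adjoint stage equations hold: P(x) = p(x)·eₛ + Δt·(AᵀQ)'(x) − Δt·[(ÃᵀP)''(x) − (AᵀP)''(x)] − Δt·p''(x)·g and 0 = −Δt·[(AᵀQ)(x) − (ÃᵀP)'(x)] + Δt·p'(x)·g. Define the linear variable transformation Q̄ = Δt·AᵀQ (componentwise in x). Then for all x ∈ ℝ: Q̄(x) = Δt·(ÃᵀP)'(x) + Δt·p'(x)·g and P(x) = p(x)·eₛ + Q̄'(x) − Δt·[(ÃᵀP)''(x) − (AᵀP)''(x)] − Δt·p''(x)·g, i.e. (P, Q̄) solves the adjoint system of the ε = 0 limit problem. Conversely, if (P, Q̄) satisfies the latter two equations for all x, then Q = (1/Δt)·(Aᵀ)⁻¹Q̄ satisfies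 the former two equations. (This is the variable-transformation equivalence in the Lemma on stiffly accurate type A schemes.) -/

import Mathlib

open Matrix

/-- The variable transformation `Q̄ = Δt AᵀQ` maps solutions of the
`ε = 0` limit of the semi-discrete adjoint equations onto solutions of the adjoint
system of the limiting heat-equation control problem, and conversely
`Q = (1/Δt)(Aᵀ)⁻¹ Q̄` maps solutions back. -/
theorem adjoint_variable_transformation_equiv
    (s : ℕ) (Δt : ℝ) (hΔt : 0 < Δt)
    (Atil A : Matrix (Fin (s + 1)) (Fin (s + 1)) ℝ) (hA : IsUnit A)
    (btil : Fin (s + 1) → ℝ)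
    (g : Fin (s + 1) → ℝ) (hg : ∀ j, g j = btil j - Atil (Fin.last s) j)
    (p : ℝ → ℝ) (hp : Differentiable ℝ p) (hp' : Differentiable ℝ (deriv p))
    (P Q : Fin (s + 1) → ℝ → ℝ)
    (hP : ∀ k, Differentiable ℝ (P k))
    (hP' : ∀ k, Differentiable ℝ (deriv (P k)))
    (hQ : ∀ k, Differentiable ℝ (Q k)) :
    -- forward direction: `(P, Q)` solves the ε = 0 limit adjoint stage equations
    -- implies `(P, Q̄)` with `Q̄ = Δt AᵀQ` solves the adjoint system of the
    -- limiting problem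
    ((∀ (x : ℝ) (k : Fin (s + 1)),
        P k x = p x * (if k = Fin.last s then (1 : ℝ) else 0)
            + Δt * deriv (fun y => ∑ i, A i k * Q i y) x
            - Δt * (deriv (deriv (fun y => ∑ i, Atil i k * P i y)) x
                - deriv (deriv (fun y => ∑ i, A i k * P i y)) x)
            - Δt * deriv (deriv p) x * g k
        ∧ (0 : ℝ)
          = -(Δt * ((∑ i, A i k * Q i x)
                - deriv (fun y => ∑ i, Atil i k * P i y) x))
            + Δt * deriv p x * g k) →
      (∀ (x : ℝ) (k : Fin (s + 1)),
        Δt * ∑ i, A i k * Q i x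
            = Δt * deriv (fun y => ∑ i, Atil i k * P i y) x
              + Δt * deriv p x * g k
        ∧ P k x = p x * (if k = Fin.last s then (1 : ℝ) else 0)
            + deriv (fun y => Δt * ∑ i, A i k * Q i y) x
            - Δt * (deriv (deriv (fun y => ∑ i, Atil i k * P i y)) x
                - deriv (deriv (fun y => ∑ i, A i k * P i y)) x)
            - Δt * deriv (deriv p) x * g k))
    ∧
    -- converse direction: if `(P, Q̄)` solves the limiting adjoint system, then
    -- `Q = (1/Δt)(Aᵀ)⁻¹ Q̄` solves the ε = 0 limit adjoint stage equations
    (∀ Qbar : Fin (s + 1) → ℝ → ℝ, (∀ k, Differentiable ℝ (Qbar k)) →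
      (∀ (x : ℝ) (k : Fin (s + 1)),
        Qbar k x
            = Δt * deriv (fun y => ∑ i, Atil i k * P i y) x
              + Δt * deriv p x * g k
        ∧ P k x = p x * (if k = Fin.last s then (1 : ℝ) else 0)
            + deriv (fun y => Qbar k y) x
            - Δt * (deriv (deriv (fun y => ∑ i, Atil i k * P i y)) x
                - deriv (deriv (fun y => ∑ i, A i k * P i y)) x)
            - Δt * deriv (deriv p) x * g k) →
      ∀ Q' : Fin (s + 1) → ℝ → ℝ,
        (∀ (k : Fin (s + 1)) (x : ℝ),
          Q' k x = (1 / Δt) * ∑ i, (Aᵀ)⁻¹ k i * Qbar i x) →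
        (∀ (x : ℝ) (k : Fin (s + 1)),
          P k x = p x * (if k = Fin.last s then (1 : ℝ) else 0)
              + Δt * deriv (fun y => ∑ i, A i k * Q' i y) x
              - Δt * (deriv (deriv (fun y => ∑ i, Atil i k * P i y)) x
                  - deriv (deriv (fun y => ∑ i, A i k * P i y)) x)
              - Δt * deriv (deriv p) x * g k
          ∧ (0 : ℝ)
            = -(Δt * ((∑ i, A i k * Q' i x)
                  - deriv (fun y => ∑ i, Atil i k * P i y) x))
              + Δt * deriv p x * g k)) := by
  constructor
  · intro h x k
    obtain ⟨h1, h2⟩ := h x k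
    have hsum : Δt * ∑ i, A i k * Q i x
        = Δt * deriv (fun y => ∑ i, Atil i k * P i y) x + Δt * deriv p x * g k := by
      linarith [h2]
    refine ⟨hsum, ?_⟩
    have hQsum : Differentiable ℝ (fun y => ∑ i, A i k * Q i y) :=
      Differentiable.fun_sum fun i _ => (hQ i).const_mul _
    have hd : deriv (fun y => Δt * ∑ i, A i k * Q i y) x
        = Δt * deriv (fun y => ∑ i, A i k * Q i y) x :=
      deriv_const_mul Δt (hQsum x)
    rw [hd]
    exact h1
  · intro Qbar hQbar h Q' hQ' x k
    have hdet : IsUnit (Aᵀ).det := by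
      rw [Matrix.det_transpose]
      exact (Matrix.isUnit_iff_isUnit_det A).mp hA
    have hinv : Aᵀ * (Aᵀ)⁻¹ = 1 := Matrix.mul_nonsing_inv _ hdet
    have key : ∀ y : ℝ, ∑ i, A i k * Q' i y = (1 / Δt) * Qbar k y := by
      intro y
      calc ∑ i, A i k * Q' i y
          = ∑ i, A i k * ((1 / Δt) * ∑ j, (Aᵀ)⁻¹ i j * Qbar j y) := by
            simp_rw [hQ']
        _ = (1 / Δt) * ∑ j, (∑ i, Aᵀ k i * (Aᵀ)⁻¹ i j) * Qbar j y := by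
            rw [Finset.mul_sum]
            simp_rw [Finset.sum_mul, Finset.mul_sum]
            rw [Finset.sum_comm]
            congr 1; ext i; congr 1; ext j
            simp [Matrix.transpose_apply]; ring
        _ = (1 / Δt) * ∑ j, (Aᵀ * (Aᵀ)⁻¹) k j * Qbar j y := by
            simp [Matrix.mul_apply]
        _ = (1 / Δt) * Qbar k y := by
            rw [hinv]
            simp [Matrix.one_apply, Finset.sum_ite_eq]
    obtain ⟨h1, h2⟩ := h x k
    have hfun : (fun y => ∑ i, A i k * Q' i y) = fun y => (1 / Δt) * Qbar k y :=
      funext key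
    constructor
    · have hd : deriv (fun y => ∑ i, A i k * Q' i y) x
          = (1 / Δt) * deriv (Qbar k) x := by
        rw [hfun]
        exact deriv_const_mul _ (hQbar k x)
      rw [hd, ← mul_assoc, mul_one_div, div_self hΔt.ne', one_mul]
      exact h2
    · rw [key x, h1]
      field_simp
      ring
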